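/- Define ξ((q₁,…,q_l)) = (A,B,C) with A = [q₂,…,q_l], B = [q₁,q₂,…,q_l] − [q₂,…,q_{l−1}], and C = −[q₁,…,q_{l−1}]. Then ξ is a section of γ: for every nonempty sequence (q₁,…,q_l) of positive integers, ξ((q₁,…,q_l)) lies in G⁺ and γ(ξ((q₁,…,q_l))) = (q₁,…,q_l). The image of ξ is exactly the set of forms in G⁺ whose discriminant has the form k²+4 or k²−4 for some integer k, and the discriminant of ξ((q₁,…,q_l)) equals ([q₁,…,q_l] + [q₂,…,q_{l−1}])² + (−1)^{l+1}·4. In particular, γ: G⁺ → S₁ is surjective. -/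

import Mathlib

/-- A binary quadratic form `A x² + B x y + C y²` with integer coefficients. -/
structure QF where
  a : ℤ
  b : ℤ
  c : ℤ

/-- The discriminant `B² - 4AC` of a form. -/
def QF.disc (f : QF) : ℤ := f.b ^ 2 - 4 * f.a * f.c

/-- The action of a matrix `[[α, β], [γ, δ]]` on a form:
`f(x,y) ↦ f(αx + βy, γx + δy)`. -/
def QF.transform (f : QF) (α β γ δ : ℤ) : QF :=
  ⟨f.a * α ^ 2 + f.b * α * γ + f.c * γ ^ 2,
   2 * f.a * α * β + f.b * (α * δ + β * γ) + 2 * f.c * γ * δ,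
   f.a * β ^ 2 + f.b * β * δ + f.c * δ ^ 2⟩

/-- A form is indefinite if its discriminant is positive and not a perfect square. -/
def QF.IsIndefinite (f : QF) : Prop := 0 < f.disc ∧ ¬ IsSquare f.disc

/-- An indefinite form `(A,B,C)` is Z-reduced if `A,B,C > 0` and `B > A + C`. -/
def QF.IsZReduced (f : QF) : Prop :=
  f.IsIndefinite ∧ 0 < f.a ∧ 0 < f.b ∧ 0 < f.c ∧ f.a + f.c < f.b

/-- An indefinite form `(A,B,C)` is G-reduced if `AC < 0` and `B > |A + C|`. -/
def QF.IsGReduced (f : QF) : Prop :=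
  f.IsIndefinite ∧ f.a * f.c < 0 ∧ |f.a + f.c| < f.b

/-- G-reduced with `A > 0`. -/
def QF.IsGPlus (f : QF) : Prop := f.IsGReduced ∧ 0 < f.a

/-- G-reduced with `A < 0`. -/
def QF.IsGMinus (f : QF) : Prop := f.IsGReduced ∧ f.a < 0

/-- `(t, u)` is the fundamental solution of `|t² - Δ u²| = 4`:
a solution in positive integers with `u` minimal. -/
def IsFundSol (Δ t u : ℤ) : Prop :=
  0 < t ∧ 0 < u ∧ |t ^ 2 - Δ * u ^ 2| = 4 ∧
    ∀ t' u' : ℤ, 0 < t' → 0 < u' → |t' ^ 2 - Δ * u' ^ 2| = 4 → u ≤ u'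

/-- The continuant of a finite sequence of integers. -/
def cont : List ℤ → ℤ
  | [] => 1
  | [q] => q
  | q :: r :: t => q * cont (r :: t) + cont t

/-- `L` is the list of partial quotients of a regular continued fraction expansion of
the rational number `x`: all partial quotients are positive and the value of the
continued fraction, namely `cont L / cont L.tail`, equals `x`. -/
def IsCF (x : ℚ) (L : List ℤ) : Prop :=
  L ≠ [] ∧ (∀ q ∈ L, 0 < q) ∧ (cont L : ℚ) = x * cont L.tail

/-- The bead sequence `β(f)` of a Z-reduced form `f = (A,B,C)` of discriminant `Δ`:
with `(t,u)` the fundamental solution of `|t² - Δu²| = 4` and `z = (t + Bu)/2`,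
it is the continued fraction expansion of `z/(z - Au)` whose number of partial
quotients is even if `t² - Δu² = -4` and odd otherwise. -/
def QF.IsBeta (f : QF) (L : List ℤ) : Prop :=
  ∃ t u : ℤ, IsFundSol f.disc t u ∧
    IsCF ((((t + f.b * u : ℤ) : ℚ) / 2) / ((((t + f.b * u : ℤ) : ℚ) / 2) - ((f.a * u : ℤ) : ℚ))) L ∧
    (t ^ 2 - f.disc * u ^ 2 = -4 → Even L.length) ∧
    (t ^ 2 - f.disc * u ^ 2 = 4 → Odd L.length)

/-- Dirichlet's map `γ(f)` for `f = (A,B,C)` in `G⁺` of discriminant `Δ`: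
with `(t,u)` the fundamental solution of `|t² - Δu²| = 4` and `z = (t + Bu)/2`,
it is the continued fraction expansion of `z/(Au)` whose number of partial
quotients is odd if `t² - Δu² = -4` and even otherwise. -/
def QF.IsGamma (f : QF) (L : List ℤ) : Prop :=
  ∃ t u : ℤ, IsFundSol f.disc t u ∧
    IsCF ((((t + f.b * u : ℤ) : ℚ) / 2) / ((f.a * u : ℤ) : ℚ)) L ∧
    (t ^ 2 - f.disc * u ^ 2 = -4 → Odd L.length) ∧
    (t ^ 2 - f.disc * u ^ 2 = 4 → Even L.length)

/-- The stars-and-bars map: `(q₁, …, q_l)` is sent to the binary string of length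
`q₁ + ⋯ + q_l - 1` whose `j`-th character is `1` exactly at the partial sums
`q₁, q₁ + q₂, …, q₁ + ⋯ + q_{l-1}`. -/
def sb : List ℤ → List Bool
  | [] => []
  | [q] => List.replicate (q - 1).toNat false
  | q :: r :: t => List.replicate (q - 1).toNat false ++ true :: sb (r :: t)

/-- `σ(f) = sb(β(f))`. -/
def QF.IsSigma (f : QF) (s : List Bool) : Prop :=
  ∃ L : List ℤ, f.IsBeta L ∧ s = sb L

/-- Zagier's reduction operator: `f ↦ f(nx + y, -x)` with `n = ⌈(B + √Δ)/(2A)⌉`. -/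
noncomputable def RZ (f : QF) : QF :=
  f.transform ⌈((f.b : ℝ) + Real.sqrt (f.disc : ℝ)) / (2 * (f.a : ℝ))⌉ 1 (-1) 0

/-- The number `δ` in Gauss's reduction operator: `|δ| = ⌊(B + √Δ)/(2|A|)⌋` with
`δ` having the sign of `A`. -/
noncomputable def gaussDelta (f : QF) : ℤ :=
  f.a.sign * ⌊((f.b : ℝ) + Real.sqrt (f.disc : ℝ)) / (2 * |(f.a : ℝ)|)⌋

/-- Gauss's reduction operator: `f ↦ f(δx + y, -x)`. -/
noncomputable def RG (f : QF) : QF := f.transform (gaussDelta f) 1 (-1) 0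

/-- Add `1` to the last entry of a list. -/
def addLast : List ℤ → List ℤ
  | [] => []
  | [q] => [q + 1]
  | q :: r :: t => q :: addLast (r :: t)

/-- Subtract `1` from the last entry of a list. -/
def subLast : List ℤ → List ℤ
  | [] => []
  | [q] => [q - 1]
  | q :: r :: t => q :: subLast (r :: t)

/-- Subtract `1` from the first entry of a list. -/
def decHead : List ℤ → List ℤ
  | [] => []
  | q :: t => (q - 1) :: t

/-- The operator `T_Z`: `(q₁,…,q_l) ↦ (q₁-1, q₂, …, q_{l-1}, q_l+1)` if `q₁ ≥ 2`;
`(q₂, q₁)` if `q₁ = 1` and `l = 2`; `(q₃, …, q_l, q₂, q₁)` if `q₁ = 1` and `l > 2`. -/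
def TZ : List ℤ → List ℤ
  | [] => []
  | [q] => [q]
  | q :: r :: s => if q = 1 then s ++ [r, 1] else (q - 1) :: addLast (r :: s)

/-- The map `μ` from G-reduced forms to Z-reduced forms. -/
def mu (f : QF) : QF :=
  if 0 < f.a then ⟨f.a, 2 * f.a + f.b, f.a + f.b + f.c⟩
  else ⟨f.a + f.b + f.c, f.b + 2 * f.c, f.c⟩

/-- The section `τ` of `β`: `τ((q₁,…,q_l)) = (A,B,C)` with `A = [q₁-1, q₂, …, q_l]`,
`C = [q₁, …, q_{l-1}, q_l - 1]`, `B = [q₁,…,q_l] + [q₁-1, q₂, …, q_{l-1}, q_l-1]`. -/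
def tau (L : List ℤ) : QF :=
  ⟨cont (decHead L), cont L + cont (subLast (decHead L)), cont (subLast L)⟩

/-- Multiply all coefficients of a form by `u`. -/
def QF.smul (u : ℤ) (f : QF) : QF := ⟨u * f.a, u * f.b, u * f.c⟩

/-- The reversal `(A,B,C)^R = (C,B,A)`. -/
def QF.rev (f : QF) : QF := ⟨f.c, f.b, f.a⟩

/-- The map `ρ((A,B,C)) = (-A, B, -C)`. -/
def rho (f : QF) : QF := ⟨-f.a, f.b, -f.c⟩

/-- A form is primitive if its coefficients have gcd 1. -/
def IsPrimitiveForm (f : QF) : Prop := Int.gcd f.a (Int.gcd f.b f.c) = 1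

/-- `SL₂(ℤ)`-equivalence of forms. -/
def FormEquiv (f g : QF) : Prop :=
  ∃ α β γ δ : ℤ, α * δ - β * γ = 1 ∧ g = f.transform α β γ δ

/-- A nonempty string is primitive if it differs from all of its nontrivial cyclic
shifts. -/
def PrimitiveList {α : Type*} (l : List α) : Prop :=
  l ≠ [] ∧ ∀ n, 0 < n → n < l.length → l.rotate n ≠ l

/-- The continuant `[q₂, …, q_{l-1}]` of the interior of a list, with the convention
that it is `0` for a list of length `≤ 1`. -/
def innerCont (L : List ℤ) : ℤ := if L.length ≤ 1 then 0 else cont (L.tail.dropLast)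

/-- The section `ξ` of `γ`: `ξ((q₁,…,q_l)) = (A,B,C)` with `A = [q₂,…,q_l]`,
`B = [q₁,…,q_l] - [q₂,…,q_{l-1}]`, `C = -[q₁,…,q_{l-1}]`. -/
def xiForm (L : List ℤ) : QF := ⟨cont L.tail, cont L - innerCont L, -(cont L.dropLast)⟩

/-- `p` is the minimal period of the purely periodic sequence `d`. -/
def IsMinPeriod {α : Type*} [Inhabited α] (d : ℕ → α) (p : List α) : Prop :=
  p ≠ [] ∧ (∀ n, d n = p.getD (n % p.length) default) ∧
    ∀ m, 0 < m → (∀ n, d (n + m) = d n) → p.length ≤ m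

/-- `d` is the sequence of partial quotients of the Denjoy continued fraction of `x`
(`true` = quotient 1, `false` = quotient 0): `ξ₀ = x`, `qₙ = 0` if `ξ_{n-1} < 1`,
`qₙ = 1` if `ξ_{n-1} > 1`, and `ξₙ = 1/(ξ_{n-1} - qₙ)`. -/
def IsDenjoySeq (x : ℝ) (d : ℕ → Bool) : Prop :=
  ∃ ξ : ℕ → ℝ, ξ 0 = x ∧
    ∀ n, ((ξ n < 1 ∧ d n = false) ∨ (1 < ξ n ∧ d n = true)) ∧
      ξ (n + 1) = 1 / (ξ n - if d n then 1 else 0)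

/-- `a` is the sequence of partial quotients of the regular continued fraction of `x`. -/
def IsRegCFSeq (x : ℝ) (a : ℕ → ℤ) : Prop :=
  ∃ ξ : ℕ → ℝ, ξ 0 = x ∧ ∀ n, a n = ⌊ξ n⌋ ∧ ξ (n + 1) = 1 / (ξ n - (a n : ℝ))

/-- Regular-to-Denjoy conversion: each partial quotient `q` becomes the string
`1 0 1 0 ⋯ 0 1` of `q` ones alternating with `q - 1` zeroes. -/
def regToDen (L : List ℤ) : List Bool :=
  (L.map fun q => true :: (List.replicate (q - 1).toNat [false, true]).flatten).flatten

/-- Replace each character `0` by the two characters `01`. -/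
def expand01 (s : List Bool) : List Bool :=
  (s.map fun b => if b then [true] else [false, true]).flatten

/-- A quadratic irrational. -/
def IsQuadIrrational (x : ℝ) : Prop :=
  Irrational x ∧ ∃ a b c : ℤ, a ≠ 0 ∧ (a : ℝ) * x ^ 2 + (b : ℝ) * x + (c : ℝ) = 0

/- ### Auxiliary lemmas for stmt13 -/

lemma cont_cons (q : ℤ) (M : List ℤ) (h : M ≠ []) :
    cont (q :: M) = q * cont M + cont M.tail := by
  cases M with
  | nil => exact absurd rfl h
  | cons r t =>
    cases t with
    | nil => simp [cont]
    | cons s t' => rfl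

lemma innerCont_cons (q : ℤ) (M : List ℤ) (h : M ≠ []) :
    innerCont (q :: M) = cont M.dropLast := by
  cases M with
  | nil => exact absurd rfl h
  | cons r t => simp [innerCont]

lemma cont_dropLast_cons (q : ℤ) (M : List ℤ) (h : M ≠ []) :
    cont ((q :: M).dropLast) = q * cont M.dropLast + innerCont M := by
  cases M with
  | nil => exact absurd rfl h
  | cons r t =>
    cases t with
    | nil => simp [cont, innerCont]
    | cons s t' =>
      cases t' with
      | nil => simp [cont, innerCont]
      | cons a b => simp [cont, innerCont]

lemma cont_facts : ∀ L : List ℤ, L ≠ [] → (∀ q ∈ L, 0 < q) →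
    1 ≤ cont L.tail ∧ 1 ≤ cont L.dropLast ∧ 0 ≤ innerCont L ∧
    innerCont L ≤ cont L.tail ∧ innerCont L ≤ cont L.dropLast ∧
    cont L.tail ≤ cont L ∧ cont L.dropLast ≤ cont L ∧
    cont L.tail + innerCont L < cont L + cont L.dropLast ∧
    cont L.dropLast + innerCont L < cont L + cont L.tail ∧
    cont L * innerCont L - cont L.tail * cont L.dropLast = (-1) ^ L.length ∧
    1 ≤ cont L ∧ (2 ≤ L.length → 1 ≤ innerCont L ∧ 2 ≤ cont L) := by
  intro L
  induction L with
  | nil => intro h; exact absurd rfl h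
  | cons q M ih =>
    intro _ hpos
    have hq : 1 ≤ q := hpos q List.mem_cons_self
    cases M with
    | nil => simp [cont, innerCont]; omega
    | cons r t =>
      have hM : (r :: t) ≠ [] := by simp
      obtain ⟨h1, h2, h3, h4, h5, h6, h7, h8, h9, h10, h11, h12⟩ :=
        ih hM (fun x hx => hpos x (List.mem_cons_of_mem _ hx))
      set M := r :: t with hMdef
      set p := cont M
      set A := cont M.tail
      set C := cont M.dropLast
      set m := innerCont M
      have e1 : cont (q :: M) = q * p + A := cont_cons q M hM
      have e2 : cont ((q :: M).tail) = p := rfl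
      have e3 : cont ((q :: M).dropLast) = q * C + m := cont_dropLast_cons q M hM
      have e4 : innerCont (q :: M) = C := innerCont_cons q M hM
      have hlen : (q :: M).length = M.length + 1 := rfl
      have hdetpow : (-1 : ℤ) ^ (q :: M).length = -(-1 : ℤ) ^ M.length := by
        rw [hlen, pow_succ]; ring
      rw [e1, e2, e3, e4, hdetpow]
      have hpq : p ≤ q * p := le_mul_of_one_le_left (by omega) hq
      have hCq : C ≤ q * C := le_mul_of_one_le_left (by omega) hq
      have hqCp : q * C ≤ q * p := by
        apply mul_le_mul_of_nonneg_left h7 (by omega)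
      have hsum : 1 ≤ (p - C) + (A - m) := by
        by_contra hcon
        push_neg at hcon
        have hpc : p = C := by omega
        have hAm : A = m := by omega
        have h0 : (0 : ℤ) = (-1) ^ M.length := by rw [← h10, hpc, hAm]; ring
        rcases neg_one_pow_eq_or ℤ M.length with h | h <;> omega
      refine ⟨by linarith, by linarith, by linarith, by linarith, by linarith,
        by linarith, by linarith, by linarith, by linarith, ?_, by linarith, ?_⟩
      · linear_combination -h10
      · intro _; exact ⟨by linarith, by linarith⟩

lemma side_m (A C' m p ε : ℤ) (hA : 1 ≤ A) (hC : 1 ≤ C') (hm : 0 ≤ m)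
    (hε : ε = 1 ∨ ε = -1) (hdet : p * m = A * C' + ε)
    (h1 : A + m < p + C') (h2 : C' + m < p + A) : m ≤ A := by
  have hεlo : -1 ≤ ε := by omega
  have hεhi : ε ≤ 1 := by omega
  have hmp : m < p := by linarith
  by_contra h
  push_neg at h
  have hm2 : 2 ≤ m := by omega
  have hCm : C' < m := by
    by_contra h'
    push_neg at h'
    have hp2 : C' + 2 ≤ p := by omega
    nlinarith [mul_le_mul_of_nonneg_right (show A ≤ m - 1 by omega)
        (show (0:ℤ) ≤ C' by omega),
      mul_le_mul_of_nonneg_right hp2 (show (0:ℤ) ≤ m by omega)]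
  nlinarith [mul_le_mul (show A ≤ m - 1 by omega) (show C' ≤ m - 1 by omega)
      (by omega : (0:ℤ) ≤ C') (by omega : (0:ℤ) ≤ m - 1),
    mul_le_mul_of_nonneg_right (show m + 1 ≤ p by omega) (show (0:ℤ) ≤ m by omega)]

lemma side_p (A C' m p ε : ℤ) (hA : 1 ≤ A) (hC : 1 ≤ C') (hm : 0 ≤ m)
    (hε : ε = 1 ∨ ε = -1) (hdet : p * m = A * C' + ε)
    (h1 : A + m < p + C') (h2 : C' + m < p + A) (hmC : m ≤ C') : A ≤ p := by
  have hεlo : -1 ≤ ε := by omega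
  have hεhi : ε ≤ 1 := by omega
  by_contra h
  push_neg at h
  rcases eq_or_lt_of_le hm with h0 | h0
  · -- m = 0
    have hAC : A * C' = -ε := by nlinarith
    have hAC1 : 1 ≤ A * C' := by
      nlinarith [mul_nonneg (by omega : (0:ℤ) ≤ A - 1) (by omega : (0:ℤ) ≤ C' - 1)]
    have hεm : ε = -1 := by omega
    have hAC2 : A * C' = 1 := by omega
    have hA1 : A = 1 := by
      have := le_mul_of_one_le_right (by omega : (0:ℤ) ≤ A) hC
      omega
    have hC1 : C' = 1 := by
      have := le_mul_of_one_le_left (by omega : (0:ℤ) ≤ C') hA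
      omega
    omega
  · have hm1 : 1 ≤ m := h0
    have hle : m ≤ 1 := by
      nlinarith [mul_le_mul_of_nonneg_right (show p ≤ A - 1 by omega)
          (show (0:ℤ) ≤ m by omega),
        mul_le_mul_of_nonneg_left hmC (show (0:ℤ) ≤ A by omega)]
    have hm1' : m = 1 := by omega
    subst hm1'
    have hp : p = A * C' + ε := by linarith [hdet]
    have hACA : A ≤ A * C' := le_mul_of_one_le_right (by omega) hC
    have hεm : ε = -1 := by omega
    have hACeq : A * C' = A := by omega
    have hC1 : C' = 1 := by
      by_contra hc
      push_neg at hc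
      nlinarith [mul_le_mul_of_nonneg_left (show 2 ≤ C' by omega)
          (show (0:ℤ) ≤ A by omega)]
    omega

lemma exists_cont_list : ∀ n : ℕ, ∀ p A C' m ε : ℤ, p ≤ (n : ℤ) →
    1 ≤ A → A ≤ p → 1 ≤ C' → C' ≤ p → 0 ≤ m → m ≤ A → m ≤ C' →
    (ε = 1 ∨ ε = -1) → p * m - A * C' = ε →
    ∃ L : List ℤ, L ≠ [] ∧ (∀ q ∈ L, 0 < q) ∧ cont L = p ∧
      cont L.tail = A ∧ cont L.dropLast = C' ∧ innerCont L = m := by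
  intro n
  induction n with
  | zero => intro p A C' m ε hpn hA hAp; omega
  | succ n ih =>
    intro p A C' m ε hpn hA hAp hC hCp hm hmA hmC hε hdet
    have hp1 : 1 ≤ p := by omega
    rcases eq_or_lt_of_le hm with h0 | hm1
    · -- m = 0 : L = [p]
      have hm0 : m = 0 := h0.symm
      subst hm0
      have hAC : A * C' = -ε := by linarith
      have hεm : ε = -1 := by
        rcases hε with h | h
        · exfalso
          nlinarith [mul_nonneg (by omega : (0:ℤ) ≤ A - 1) (by omega : (0:ℤ) ≤ C' - 1)]
        · exact h
      have hA1 : A = 1 := by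
        have := le_mul_of_one_le_right (by omega : (0:ℤ) ≤ A) hC
        omega
      have hC1 : C' = 1 := by
        have := le_mul_of_one_le_left (by omega : (0:ℤ) ≤ C') hA
        omega
      refine ⟨[p], by simp, by simpa using (show 0 < p by omega), by simp [cont], ?_, ?_, ?_⟩
      · simp [cont]; omega
      · simp [cont]; omega
      · simp [innerCont]
    · -- 1 ≤ m
      have hεlo : -1 ≤ ε := by rcases hε with h | h <;> omega
      have hεhi : ε ≤ 1 := by rcases hε with h | h <;> omega
      have hA1e : ε = -1 → 2 ≤ A := by
        intro hεm
        by_contra hc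
        have hA1 : A = 1 := by omega
        have hmm : m = 1 := by omega
        rw [hA1, hmm] at hdet
        omega
      have hAltp : A < p := by
        rcases eq_or_lt_of_le hAp with heq | h
        · exfalso
          subst heq
          have hd : A * (m - C') = ε := by linarith [hdet, mul_sub A m C']
          have hdvd : A ∣ (1 : ℤ) := by
            rcases hε with h | h
            · exact ⟨m - C', by omega⟩
            · rw [show (1:ℤ) = -ε by omega]
              exact dvd_neg.mpr ⟨m - C', hd.symm⟩
          have := Int.le_of_dvd one_pos hdvd
          have hAone : A = 1 := by omega
          have hmone : m = 1 := by omega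
          have hCone : C' = 1 := by omega
          rw [hAone, hmone, hCone] at hd
          omega
        · exact h
      -- Euclidean step
      set q := (p - 1) / A with hqdef
      set r := (p - 1) % A with hrdef
      have hdm : A * q + r = p - 1 := Int.mul_ediv_add_emod (p - 1) A
      have hr0 : 0 ≤ r := Int.emod_nonneg _ (by omega)
      have hrA : r < A := Int.emod_lt_of_pos _ (by omega)
      have hq1 : 1 ≤ q := by
        by_contra hcq
        push_neg at hcq
        have : A * q ≤ 0 := mul_nonpos_of_nonneg_of_nonpos (by omega) (by omega)
        omega
      set Ah := r + 1 with hAhdef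
      set mh := C' - q * m with hmhdef
      have hdet' : A * mh - Ah * m = -ε := by
        simp only [hmhdef, hAhdef]
        linear_combination (-1 : ℤ) * hdet - m * hdm
      have hm0' : 0 ≤ mh := by
        have k1 : (A * q) * m ≤ (p - 1) * m :=
          mul_le_mul_of_nonneg_right (by omega) hm
        have k2 : A * (q * m) ≤ A * C' := by nlinarith
        have := le_of_mul_le_mul_left k2 (by omega : (0:ℤ) < A)
        omega
      have hmhm : mh ≤ m := by
        rcases hε with hε1 | hε1
        · -- ε = 1
          have k2 : A * C' < A * (q * m + m) := by nlinarith
          have := lt_of_mul_lt_mul_left k2 (by omega : (0:ℤ) ≤ A)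
          omega
        · -- ε = -1
          have hA2 : 2 ≤ A := hA1e hε1
          rcases eq_or_lt_of_le (by omega : r ≤ A - 1) with hre | hre
          · exfalso
            have hpA : p = A * (q + 1) := by rw [mul_add]; omega
            have hdvd : A ∣ (1 : ℤ) := by
              rw [show (1:ℤ) = -ε by omega]
              refine dvd_neg.mpr ⟨(q + 1) * m - C', ?_⟩
              rw [← hdet, hpA]; ring
            have := Int.le_of_dvd one_pos hdvd
            omega
          · have k2 : A * C' ≤ A * (q * m + m) := by nlinarith
            have := le_of_mul_le_mul_left k2 (by omega : (0:ℤ) < A)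
            omega
      have hmhAh : mh ≤ Ah := by
        rcases hε with hε1 | hε1
        · have k2 : A * mh < A * Ah := by nlinarith [mul_le_mul_of_nonneg_left hmA (by omega : (0:ℤ) ≤ Ah)]
          have := lt_of_mul_lt_mul_left k2 (by omega : (0:ℤ) ≤ A)
          omega
        · have hA2 : 2 ≤ A := hA1e hε1
          have k2 : A * mh < A * (Ah + 1) := by
            nlinarith [mul_le_mul_of_nonneg_left hmA (by omega : (0:ℤ) ≤ Ah)]
          have := lt_of_mul_lt_mul_left k2 (by omega : (0:ℤ) ≤ A)
          omega
      obtain ⟨M, hMne, hMpos, hc1, hc2, hc3, hc4⟩ :=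
        ih A Ah m mh (-ε) (by push_cast at hpn ⊢; omega) (by omega) (by omega)
          (by omega) (by omega) hm0' hmhAh hmhm (by omega) hdet'
      refine ⟨q :: M, by simp, ?_, ?_, ?_, ?_, ?_⟩
      · intro x hx
        rcases List.mem_cons.mp hx with h | h
        · omega
        · exact hMpos x h
      · rw [cont_cons q M hMne, hc1, hc2]; linear_combination hdm
      · simpa using hc1
      · rw [cont_dropLast_cons q M hMne, hc3, hc4]
        simp only [hmhdef]; ring
      · rw [innerCont_cons q M hMne, hc3]

lemma not_sq_pm (s e : ℤ) (he : e = 1 ∨ e = -1) (hs : 1 ≤ s) (hs3 : e = 1 → 3 ≤ s) :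
    ¬ IsSquare (s ^ 2 - 4 * e) := by
  rintro ⟨k, hk⟩
  have hk' : s ^ 2 - 4 * e = |k| * |k| := by rw [abs_mul_abs_self]; exact hk
  set j := |k| with hj
  have hj0 : 0 ≤ j := abs_nonneg k
  rcases he with he | he
  · subst he
    have h3 := hs3 rfl
    have hjs : j < s := by nlinarith
    nlinarith [mul_le_mul (show j ≤ s - 1 by omega) (show j ≤ s - 1 by omega) hj0
      (by omega : (0:ℤ) ≤ s - 1)]
  · subst he
    have hjs : s < j := by nlinarith
    have h4 : 2 * s + 1 ≤ 4 := by
      nlinarith [mul_le_mul (show s + 1 ≤ j by omega) (show s + 1 ≤ j by omega)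
        (by omega : (0:ℤ) ≤ s + 1) hj0]
    have hs1 : s = 1 := by omega
    rw [hs1] at hk'
    have hj5 : j * j = 5 := by linarith
    have hj2 : j ≤ 2 := by nlinarith
    have hjg : 2 ≤ j := by omega
    have : j = 2 := by omega
    rw [this] at hj5
    norm_num at hj5

lemma part_one (L : List ℤ) (hne : L ≠ []) (hpos : ∀ q ∈ L, 0 < q) :
    (xiForm L).IsGPlus ∧ (xiForm L).IsGamma L ∧
      (xiForm L).disc =
        (cont L + innerCont L) ^ 2 + (-1 : ℤ) ^ (L.length + 1) * 4 := by
  obtain ⟨h1, h2, h3, h4, h5, h6, h7, h8, h9, h10, h11, h12⟩ := cont_facts L hne hpos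
  set p := cont L with hp
  set A := cont L.tail with hA
  set C := cont L.dropLast with hC
  set m := innerCont L with hm
  set e := ((-1 : ℤ) ^ L.length) with he
  have hee : e = 1 ∨ e = -1 := neg_one_pow_eq_or ℤ L.length
  have hl1 : 1 ≤ L.length := by
    cases L with
    | nil => exact absurd rfl hne
    | cons a t => simp
  have hxa : (xiForm L).a = A := rfl
  have hxb : (xiForm L).b = p - m := rfl
  have hxc : (xiForm L).c = -C := rfl
  have hdisc : (xiForm L).disc = (p + m) ^ 2 - 4 * e := by
    show (p - m) ^ 2 - 4 * A * (-C) = (p + m) ^ 2 - 4 * e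
    linear_combination (-4 : ℤ) * h10
  have hs3 : e = 1 → 3 ≤ p + m := by
    intro he1
    have hev : Even L.length := by
      by_contra hodd
      have hod : Odd L.length := (Nat.even_or_odd L.length).resolve_left hodd
      have hpw : ((-1 : ℤ)) ^ L.length = -1 := hod.neg_one_pow
      rw [← he] at hpw
      omega
    have hlen2 : 2 ≤ L.length := by
      rcases hev with ⟨c, hc⟩; omega
    obtain ⟨hm1, hp2⟩ := h12 hlen2
    omega
  have hs1 : 1 ≤ p + m := by omega
  have hdpos : 0 < (xiForm L).disc := by
    rw [hdisc]
    rcases hee with h | h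
    · have := hs3 h; nlinarith
    · nlinarith
  have hnsq : ¬ IsSquare (xiForm L).disc := by
    rw [hdisc]
    exact not_sq_pm (p + m) e hee hs1 hs3
  have hGP : (xiForm L).IsGPlus := by
    refine ⟨⟨⟨hdpos, hnsq⟩, ?_, ?_⟩, ?_⟩
    · rw [hxa, hxc]
      have : 0 < A * C := mul_pos (by omega) (by omega)
      nlinarith
    · rw [hxa, hxb, hxc]
      rw [abs_lt]
      constructor <;> linarith
    · rw [hxa]; omega
  refine ⟨hGP, ?_, ?_⟩
  · -- IsGamma
    refine ⟨p + m, 1, ⟨by omega, one_pos, ?_, ?_⟩, ⟨hne, hpos, ?_⟩, ?_, ?_⟩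
    · rw [hdisc]
      have : (p + m) ^ 2 - ((p + m) ^ 2 - 4 * e) * 1 ^ 2 = 4 * e := by ring
      rw [this]
      rcases hee with h | h <;> rw [h] <;> norm_num
    · intro t' u' _ hu' _; omega
    · -- CF value
      rw [hxb, hxa]
      have hA0 : ((A : ℚ)) ≠ 0 := by
        have : (1 : ℚ) ≤ (A : ℚ) := by exact_mod_cast h1
        linarith
      push_cast
      field_simp
      rw [← hp, ← hA]; ring
    · intro hcase
      rw [hdisc] at hcase
      have he4 : e = -1 := by
        have h4 : 4 * e = -4 := by linear_combination hcase
        omega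
      rcases Nat.even_or_odd L.length with hev | hod
      · exfalso
        have hpw : ((-1 : ℤ)) ^ L.length = 1 := hev.neg_one_pow
        rw [← he] at hpw
        omega
      · exact hod
    · intro hcase
      rw [hdisc] at hcase
      have he4 : e = 1 := by
        have h4 : 4 * e = 4 := by linear_combination hcase
        omega
      by_contra hodd
      have hod : Odd L.length := (Nat.even_or_odd L.length).resolve_left hodd
      have hpw : ((-1 : ℤ)) ^ L.length = -1 := hod.neg_one_pow
      rw [← he] at hpw
      omega
  · -- discriminant formula
    rw [hdisc]
    have : (-1 : ℤ) ^ (L.length + 1) = -e := by rw [he, pow_succ]; ring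
    rw [this]
    ring

lemma part_two (f : QF) (hGP : f.IsGPlus)
    (hk : ∃ k : ℤ, f.disc = k ^ 2 + 4 ∨ f.disc = k ^ 2 - 4) :
    ∃ L : List ℤ, L ≠ [] ∧ (∀ q ∈ L, 0 < q) ∧ xiForm L = f := by
  obtain ⟨A, B, Cf⟩ := f
  obtain ⟨⟨⟨hdpos, hdnsq⟩, hac, habs⟩, ha⟩ := hGP
  obtain ⟨k, hk⟩ := hk
  simp only [QF.disc] at hk
  have ha' : 0 < A := ha
  have hA : 1 ≤ A := ha'
  have hacc : A * Cf < 0 := hac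
  have hCneg : Cf < 0 := by
    by_contra h
    push_neg at h
    nlinarith
  set C' := -Cf with hC'def
  have hC1 : 1 ≤ C' := by omega
  have habs2 : |A + Cf| < B := habs
  have habs' := abs_lt.mp habs2
  have hB1 : 1 ≤ B := by
    have := abs_nonneg (A + Cf)
    omega
  have hAC1 : 1 ≤ A * C' := by
    nlinarith [mul_nonneg (by omega : (0:ℤ) ≤ A - 1) (by omega : (0:ℤ) ≤ C' - 1)]
  set s := |k| with hsdef
  have hs0 : 0 ≤ s := abs_nonneg k
  have hsk : s ^ 2 = k ^ 2 := sq_abs k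
  rcases hk with hk | hk
  · -- disc = k² + 4, ε = -1
    have hssq : s ^ 2 = B ^ 2 + 4 * (A * C' - 1) := by
      rw [hsk]; linear_combination -hk
    have hsB : B ≤ s := by
      by_contra h
      push_neg at h
      nlinarith [mul_le_mul (show s ≤ B - 1 by omega) (show s ≤ B - 1 by omega) hs0
        (by omega : (0:ℤ) ≤ B - 1)]
    have hev : Even (s - B) := by
      have h1 : Even (s ^ 2 - B ^ 2) := ⟨2 * (A * C' - 1), by linarith⟩
      have h2 : Even (s ^ 2) ↔ Even (B ^ 2) := Int.even_sub.mp h1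
      have h3 : Even s ↔ Even B := by simpa [Int.even_pow] using h2
      exact Int.even_sub.mpr h3
    obtain ⟨m, hm2⟩ := hev
    have hm0 : 0 ≤ m := by omega
    have hdet4 : 4 * ((B + m) * m) = 4 * (A * C' - 1) := by
      linear_combination hssq - (s + B) * hm2 - 2 * m * hm2
    have hdet : (B + m) * m = A * C' + (-1) := by linarith
    have hi1 : A + m < (B + m) + C' := by omega
    have hi2 : C' + m < (B + m) + A := by omega
    have hmA := side_m A C' m (B + m) (-1) hA hC1 hm0 (Or.inr rfl) hdet hi1 hi2
    have hmC := side_m C' A m (B + m) (-1) hC1 hA hm0 (Or.inr rfl)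
      (by linarith [mul_comm A C']) hi2 hi1
    have hAp := side_p A C' m (B + m) (-1) hA hC1 hm0 (Or.inr rfl) hdet hi1 hi2 hmC
    have hCp := side_p C' A m (B + m) (-1) hC1 hA hm0 (Or.inr rfl)
      (by linarith [mul_comm A C']) hi2 hi1 hmA
    obtain ⟨L, hLne, hLpos, hc1, hc2, hc3, hc4⟩ :=
      exists_cont_list (B + m).toNat (B + m) A C' m (-1)
        (by rw [Int.toNat_of_nonneg (by omega)]) hA hAp hC1 hCp hm0 hmA hmC
        (Or.inr rfl) (by linarith)
    refine ⟨L, hLne, hLpos, ?_⟩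
    unfold xiForm
    rw [hc1, hc2, hc3, hc4]
    simp only [QF.mk.injEq]
    refine ⟨trivial, by ring, by omega⟩
  · -- disc = k² - 4, ε = 1
    have hssq : s ^ 2 = B ^ 2 + 4 * (A * C' + 1) := by
      rw [hsk]; linear_combination -hk
    have hsB : B ≤ s := by
      by_contra h
      push_neg at h
      nlinarith [mul_le_mul (show s ≤ B - 1 by omega) (show s ≤ B - 1 by omega) hs0
        (by omega : (0:ℤ) ≤ B - 1)]
    have hev : Even (s - B) := by
      have h1 : Even (s ^ 2 - B ^ 2) := ⟨2 * (A * C' + 1), by linarith⟩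
      have h2 : Even (s ^ 2) ↔ Even (B ^ 2) := Int.even_sub.mp h1
      have h3 : Even s ↔ Even B := by simpa [Int.even_pow] using h2
      exact Int.even_sub.mpr h3
    obtain ⟨m, hm2⟩ := hev
    have hm0 : 0 ≤ m := by omega
    have hdet4 : 4 * ((B + m) * m) = 4 * (A * C' + 1) := by
      linear_combination hssq - (s + B) * hm2 - 2 * m * hm2
    have hdet : (B + m) * m = A * C' + 1 := by linarith
    have hi1 : A + m < (B + m) + C' := by omega
    have hi2 : C' + m < (B + m) + A := by omega
    have hmA := side_m A C' m (B + m) 1 hA hC1 hm0 (Or.inl rfl) hdet hi1 hi2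
    have hmC := side_m C' A m (B + m) 1 hC1 hA hm0 (Or.inl rfl)
      (by linarith [mul_comm A C']) hi2 hi1
    have hAp := side_p A C' m (B + m) 1 hA hC1 hm0 (Or.inl rfl) hdet hi1 hi2 hmC
    have hCp := side_p C' A m (B + m) 1 hC1 hA hm0 (Or.inl rfl)
      (by linarith [mul_comm A C']) hi2 hi1 hmA
    obtain ⟨L, hLne, hLpos, hc1, hc2, hc3, hc4⟩ :=
      exists_cont_list (B + m).toNat (B + m) A C' m 1
        (by rw [Int.toNat_of_nonneg (by omega)]) hA hAp hC1 hCp hm0 hmA hmC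
        (Or.inl rfl) (by linarith)
    refine ⟨L, hLne, hLpos, ?_⟩
    unfold xiForm
    rw [hc1, hc2, hc3, hc4]
    simp only [QF.mk.injEq]
    refine ⟨trivial, by ring, by omega⟩

/-- **Theorem (section of γ).** `ξ` is a section of `γ` landing in `G⁺`, its image
is the set of forms in `G⁺` of discriminant `k² ± 4`, and the discriminant of
`ξ((q₁,…,q_l))` is `([q₁,…,q_l] + [q₂,…,q_{l-1}])² + (-1)^{l+1}·4`.  In
particular `γ : G⁺ → S₁` is surjective. -/
theorem stmt13 :
    (∀ L : List ℤ, L ≠ [] → (∀ q ∈ L, 0 < q) →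
      (xiForm L).IsGPlus ∧ (xiForm L).IsGamma L ∧
      (xiForm L).disc =
        (cont L + innerCont L) ^ 2 + (-1 : ℤ) ^ (L.length + 1) * 4) ∧
    (∀ f : QF, f.IsGPlus →
      (∃ k : ℤ, f.disc = k ^ 2 + 4 ∨ f.disc = k ^ 2 - 4) →
      ∃ L : List ℤ, L ≠ [] ∧ (∀ q ∈ L, 0 < q) ∧ xiForm L = f) := by
  exact ⟨fun L h1 h2 => part_one L h1 h2, fun f h1 h2 => part_two f h1 h2⟩
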